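/- Assume the L¹ spectral inequality on E holds with constant N ≥ 1. Let T > 0 and let J ⊆ (0,T) be a Lebesgue measurable set with |J| > 0. Then there exists C > 0 such that for every f ∈ L²(μ): ‖S_T f‖_{L²(μ)} ≤ C ∫_0^T 1_J(s) ( ∫_E |S_s f| dμ ) ds. -/

import Mathlib

open MeasureTheory

open Filter



section Aux
variable {M : Type} [MeasurableSpace M] {μ : Measure M} [IsFiniteMeasure μ]

noncomputable def cLS (μ : Measure M) : ℝ := ((μ Set.univ).toReal) ^ ((1:ℝ)/2)

set_option linter.unusedSectionVars false in
lemma cLS_nonneg : 0 ≤ cLS μ := Real.rpow_nonneg ENNReal.toReal_nonneg _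

lemma Lp2.integrable (h : Lp ℝ 2 μ) : Integrable (⇑h) μ :=
  memLp_one_iff_integrable.mp ((Lp.memLp h).mono_exponent (by norm_num))

lemma Lp2.int_abs_le (h : Lp ℝ 2 μ) : ∫ x, |h x| ∂μ ≤ cLS μ * ‖h‖ := by
  have h1 : ∫ x, |h x| ∂μ = (eLpNorm (⇑h) 1 μ).toReal := by
    simp only [← Real.norm_eq_abs]
    rw [integral_norm_eq_lintegral_enorm (Lp.aestronglyMeasurable h),
      ← eLpNorm_one_eq_lintegral_enorm]
  have h2 : eLpNorm (⇑h) 1 μ ≤ eLpNorm (⇑h) 2 μ * μ Set.univ ^ ((1:ℝ)/2) := by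
    have h3 := eLpNorm_le_eLpNorm_mul_rpow_measure_univ (μ := μ) (p := 1) (q := 2)
      (by norm_num) (Lp.aestronglyMeasurable h)
    norm_num at h3 ⊢
    try exact h3
  rw [h1]
  have hfin : eLpNorm (⇑h) 2 μ * μ Set.univ ^ ((1:ℝ)/2) ≠ ⊤ := by
    apply ENNReal.mul_ne_top (Lp.eLpNorm_ne_top h)
    exact (ENNReal.rpow_lt_top_of_nonneg (by norm_num) (measure_ne_top μ _)).ne
  calc (eLpNorm (⇑h) 1 μ).toReal ≤ (eLpNorm (⇑h) 2 μ * μ Set.univ ^ ((1:ℝ)/2)).toReal :=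
        ENNReal.toReal_mono hfin h2
    _ = cLS μ * ‖h‖ := by
        rw [ENNReal.toReal_mul, Lp.norm_def, cLS, ← ENNReal.toReal_rpow, mul_comm]

lemma Lp2.setInt_abs_le (E : Set M) (h : Lp ℝ 2 μ) : ∫ x in E, |h x| ∂μ ≤ cLS μ * ‖h‖ := by
  refine le_trans ?_ (Lp2.int_abs_le h)
  refine setIntegral_le_integral (Lp2.integrable h).abs ?_
  exact Eventually.of_forall fun x => abs_nonneg _

end Aux



section Hilbert
variable {H : Type*} [NormedAddCommGroup H] [InnerProductSpace ℝ H]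

lemma coeff_of_hasSum (e : HilbertBasis ℕ ℝ H) {c : ℕ → ℝ} {g : H}
    (h : HasSum (fun k => c k • (e k : H)) g) (j : ℕ) : e.repr g j = c j := by
  have h2 := h.mapL (innerSL ℝ (e j))
  have h3 : (fun k => (innerSL ℝ (e j)) (c k • (e k : H)))
      = fun k => if k = j then c j else 0 := by
    funext k
    rw [innerSL_apply_apply, real_inner_smul_right, orthonormal_iff_ite.mp e.orthonormal]
    by_cases hk : k = j
    · subst hk; simp
    · simp [hk, Ne.symm hk]
  rw [h3] at h2
  rw [e.repr_apply_apply]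
  exact h2.unique (hasSum_ite_eq j (c j))

lemma hasSum_sq_repr (e : HilbertBasis ℕ ℝ H) (g : H) :
    HasSum (fun k => (e.repr g k)^2) (‖g‖^2) := by
  have h := e.hasSum_inner_mul_inner g g
  have h1 : (fun k => (inner ℝ g (e k : H) : ℝ) * inner ℝ (e k : H) g)
      = fun k => (e.repr g k)^2 := by
    funext k
    rw [e.repr_apply_apply, sq, real_inner_comm (e k : H) g]
  rw [h1, real_inner_self_eq_norm_sq] at h
  exact h

lemma norm_le_of_coeff (e : HilbertBasis ℕ ℝ H) {g h : H} {C : ℝ} (hC : 0 ≤ C)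
    (hk : ∀ k, |e.repr g k| ≤ C * |e.repr h k|) : ‖g‖ ≤ C * ‖h‖ := by
  have h1 := hasSum_sq_repr e g
  have h2 := (hasSum_sq_repr e h).mul_left (C^2)
  have h3 : ‖g‖^2 ≤ C^2 * ‖h‖^2 := by
    refine hasSum_le (fun k => ?_) h1 h2
    calc (e.repr g k)^2 = |e.repr g k|^2 := (sq_abs _).symm
      _ ≤ (C * |e.repr h k|)^2 := pow_le_pow_left₀ (abs_nonneg _) (hk k) 2
      _ = C^2 * (e.repr h k)^2 := by rw [mul_pow, sq_abs]
  have h4 : ‖g‖^2 ≤ (C * ‖h‖)^2 := by rw [mul_pow]; exact h3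
  calc ‖g‖ = Real.sqrt (‖g‖^2) := (Real.sqrt_sq (norm_nonneg g)).symm
    _ ≤ Real.sqrt ((C * ‖h‖)^2) := Real.sqrt_le_sqrt h4
    _ = C * ‖h‖ := Real.sqrt_sq (by positivity)

end Hilbert



section CTS
variable {H : Type*} [NormedAddCommGroup H] [InnerProductSpace ℝ H]

lemma hasSum_sq_repr' (e : HilbertBasis ℕ ℝ H) (g : H) :
    HasSum (fun k => (e.repr g k)^2) (‖g‖^2) := by
  have h := e.hasSum_inner_mul_inner g g
  have h1 : (fun k => (inner ℝ g (e k : H) : ℝ) * inner ℝ (e k : H) g)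
      = fun k => (e.repr g k)^2 := by
    funext k
    rw [e.repr_apply_apply, sq, real_inner_comm (e k : H) g]
  rw [h1, real_inner_self_eq_norm_sq] at h
  exact h

lemma ctsS_aux (e : HilbertBasis ℕ ℝ H) (lam : ℕ → ℝ)
    (S : ℝ → H → H)
    (coeffS : ∀ t, 0 ≤ t → ∀ (f : H) k, e.repr (S t f) k
      = Real.exp (-(t * lam k ^ 2)) * e.repr f k)
    (f : H) (s₀ : ℝ) (hs₀ : 0 ≤ s₀) :
    Tendsto (fun s => S s f) (nhdsWithin s₀ (Set.Ici 0)) (nhds (S s₀ f)) := by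
  rw [tendsto_iff_norm_sub_tendsto_zero]
  set c : ℕ → ℝ := fun k => e.repr f k with hcdef
  set F : ℝ → ℕ → ℝ := fun s k =>
    ((Real.exp (-(s * lam k^2)) - Real.exp (-(s₀ * lam k^2))) * c k)^2 with hFdef
  have hsq : ∀ s, 0 ≤ s → ∀ k, e.repr (S s f - S s₀ f) k
      = (Real.exp (-(s * lam k^2)) - Real.exp (-(s₀ * lam k^2))) * c k := by
    intro s hs k
    rw [map_sub, lp.coeFn_sub, Pi.sub_apply, coeffS s hs f k, coeffS s₀ hs₀ f k]
    ring
  have key : Tendsto (fun s => ∑' k, F s k) (nhdsWithin s₀ (Set.Ici 0)) (nhds 0) := by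
    have key0 : Tendsto (fun s => ∑' k, F s k) (nhdsWithin s₀ (Set.Ici 0))
        (nhds (∑' _ : ℕ, (0:ℝ))) := ?_
    · simpa using key0
    refine tendsto_tsum_of_dominated_convergence
      (bound := fun k => 4 * (c k)^2) ((hasSum_sq_repr' e f).summable.mul_left 4) ?_ ?_
    · intro k
      have hcont : Continuous fun s : ℝ => F s k := by
        simp only [hFdef]
        fun_prop
      have h2 := hcont.tendsto s₀
      have h3 : F s₀ k = 0 := by simp [hFdef]
      rw [h3] at h2
      exact h2.mono_left nhdsWithin_le_nhds
    · filter_upwards [eventually_mem_nhdsWithin] with s hs k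
      have hs' : (0:ℝ) ≤ s := hs
      have e1 : Real.exp (-(s*lam k^2)) ≤ 1 :=
        Real.exp_le_one_iff.mpr (neg_nonpos.mpr (mul_nonneg hs' (sq_nonneg _)))
      have e2 : Real.exp (-(s₀*lam k^2)) ≤ 1 :=
        Real.exp_le_one_iff.mpr (neg_nonpos.mpr (mul_nonneg hs₀ (sq_nonneg _)))
      have p1 := Real.exp_pos (-(s*lam k^2))
      have p2 := Real.exp_pos (-(s₀*lam k^2))
      have hb1 : |Real.exp (-(s*lam k^2)) - Real.exp (-(s₀*lam k^2))| ≤ 2 := by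
        rw [abs_sub_le_iff]; constructor <;> linarith
      have : ‖F s k‖ = F s k := by
        rw [Real.norm_eq_abs, abs_of_nonneg (sq_nonneg _)]
      rw [this, hFdef]
      calc ((Real.exp (-(s*lam k^2)) - Real.exp (-(s₀*lam k^2))) * c k)^2
          = (Real.exp (-(s*lam k^2)) - Real.exp (-(s₀*lam k^2)))^2 * (c k)^2 := by
            rw [mul_pow]
        _ ≤ 2^2 * (c k)^2 := by
            refine mul_le_mul_of_nonneg_right ?_ (sq_nonneg _)
            rw [← sq_abs]
            exact pow_le_pow_left₀ (abs_nonneg _) hb1 2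
        _ = 4 * (c k)^2 := by norm_num
  have heq : ∀ᶠ s in nhdsWithin s₀ (Set.Ici 0),
      Real.sqrt (∑' k, F s k) = ‖S s f - S s₀ f‖ := by
    filter_upwards [eventually_mem_nhdsWithin] with s hs
    have hps := hasSum_sq_repr' e (S s f - S s₀ f)
    have h1 : (fun k => (e.repr (S s f - S s₀ f) k)^2) = fun k => F s k := by
      funext k; rw [hsq s hs k]
    rw [h1] at hps
    rw [hps.tsum_eq, Real.sqrt_sq (norm_nonneg _)]
  have hsqrt : Tendsto (fun s => Real.sqrt (∑' k, F s k))
      (nhdsWithin s₀ (Set.Ici 0)) (nhds 0) := by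
    have := (Real.continuous_sqrt.tendsto 0).comp key
    simpa [Function.comp_def] using this
  exact hsqrt.congr' heq

end CTS



lemma density_aux (J : Set ℝ) (hJm : MeasurableSet J) (hJpos : 0 < volume J) :
    ∃ ℓ ∈ J, ∃ r₁ > (0:ℝ), ∀ r, 0 < r → r ≤ r₁ →
      (9/10 : ℝ) * r ≤ (volume (J ∩ Set.Ioo ℓ (ℓ + r))).toReal := by
  have h1 := Besicovitch.ae_tendsto_measure_inter_div (volume : Measure ℝ) J
  have hne : volume.restrict J ≠ 0 := by
    refine Measure.measure_univ_ne_zero.mp ?_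
    rw [Measure.restrict_apply_univ]; exact hJpos.ne'
  have : (ae (volume.restrict J)).NeBot := ae_neBot.mpr hne
  obtain ⟨ℓ, hP, hℓJ⟩ := (h1.and (ae_restrict_mem hJm)).exists
  refine ⟨ℓ, hℓJ, ?_⟩
  have h19 : ∀ᶠ r in nhdsWithin 0 (Set.Ioi 0),
      ENNReal.ofReal (19/20) ≤ volume (J ∩ Metric.closedBall ℓ r) /
        volume (Metric.closedBall ℓ r) :=
    hP.eventually (eventually_ge_nhds (ENNReal.ofReal_lt_one.mpr (by norm_num)))
  obtain ⟨u, hu, hsub⟩ := mem_nhdsGT_iff_exists_Ioc_subset.mp h19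
  refine ⟨u, hu, fun r h0 hle => ?_⟩
  have hr := hsub ⟨h0, hle⟩
  have hB0 : volume (Metric.closedBall ℓ r) ≠ 0 := by
    rw [Real.volume_closedBall]
    simp only [ne_eq, ENNReal.ofReal_eq_zero, not_le]
    linarith
  have hBt : volume (Metric.closedBall ℓ r) ≠ ⊤ := by
    rw [Real.volume_closedBall]; exact ENNReal.ofReal_ne_top
  have hmain : ENNReal.ofReal (19/20) * volume (Metric.closedBall ℓ r)
      ≤ volume (J ∩ Metric.closedBall ℓ r) := by
    calc ENNReal.ofReal (19/20) * volume (Metric.closedBall ℓ r)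
        ≤ (volume (J ∩ Metric.closedBall ℓ r) / volume (Metric.closedBall ℓ r))
            * volume (Metric.closedBall ℓ r) := mul_le_mul_left hr _
      _ = volume (J ∩ Metric.closedBall ℓ r) := ENNReal.div_mul_cancel hB0 hBt
  rw [Real.volume_closedBall] at hmain
  -- split the ball
  have hsubset : J ∩ Metric.closedBall ℓ r
      ⊆ (J ∩ Set.Ioo ℓ (ℓ + r)) ∪ (Set.Icc (ℓ - r) ℓ ∪ {ℓ + r}) := by
    rintro x ⟨hxJ, hx⟩
    rw [Real.closedBall_eq_Icc] at hx
    obtain ⟨hx1, hx2⟩ := hx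
    rcases le_or_gt x ℓ with h | h
    · exact Or.inr (Or.inl ⟨hx1, h⟩)
    · rcases eq_or_lt_of_le hx2 with h2 | h2
      · exact Or.inr (Or.inr (by simp [h2]))
      · exact Or.inl ⟨hxJ, h, h2⟩
  have h3 : volume (Set.Icc (ℓ - r) ℓ ∪ {ℓ + r} : Set ℝ) ≤ ENNReal.ofReal r := by
    refine (measure_union_le _ _).trans ?_
    rw [Real.volume_Icc, Real.volume_singleton, add_zero]
    exact le_of_eq (by ring_nf)
  have h4 : ENNReal.ofReal (19/20) * ENNReal.ofReal (2*r)
      ≤ volume (J ∩ Set.Ioo ℓ (ℓ + r)) + ENNReal.ofReal r :=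
    hmain.trans ((measure_mono hsubset).trans
      ((measure_union_le _ _).trans (add_le_add le_rfl h3)))
  have hfin1 : volume (J ∩ Set.Ioo ℓ (ℓ + r)) ≠ ⊤ := by
    refine ne_top_of_le_ne_top ?_ (measure_mono Set.inter_subset_right)
    rw [Real.volume_Ioo]; exact ENNReal.ofReal_ne_top
  have h5 := ENNReal.toReal_mono
    (by exact ENNReal.add_ne_top.mpr ⟨hfin1, ENNReal.ofReal_ne_top⟩) h4
  rw [ENNReal.toReal_add hfin1 ENNReal.ofReal_ne_top, ← ENNReal.ofReal_mul (by norm_num),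
    ENNReal.toReal_ofReal (by linarith), ENNReal.toReal_ofReal (by linarith)] at h5
  linarith

set_option maxHeartbeats 2000000 in
/-- final observability estimate. If the `L¹` spectral inequality on `E`
holds with constant `N ≥ 1`, `T > 0` and `J ⊆ (0,T)` has positive Lebesgue measure, then
there is `C > 0` such that for every `f ∈ L²(μ)`:
`‖S_T f‖_{L²} ≤ C ∫_0^T 1_J(s) (∫_E |S_s f| dμ) ds`. -/
theorem observability_from_J {M : Type} [MeasurableSpace M] (μ : Measure M)
    [IsFiniteMeasure μ]
    (e : HilbertBasis ℕ ℝ (Lp ℝ 2 μ)) (lam : ℕ → ℝ) (hlam : ∀ k, 0 ≤ lam k)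
    (E : Set M) (hE : MeasurableSet E)
    (Proj : ℝ → Lp ℝ 2 μ → Lp ℝ 2 μ)
    (hProj : ∀ (Λ : ℝ) (f : Lp ℝ 2 μ),
      HasSum (fun k => (if lam k ≤ Λ then e.repr f k else 0) • e k) (Proj Λ f))
    (S : ℝ → Lp ℝ 2 μ → Lp ℝ 2 μ)
    (hS : ∀ t : ℝ, 0 ≤ t → ∀ f : Lp ℝ 2 μ,
      HasSum (fun k => (Real.exp (-(t * lam k ^ 2)) * e.repr f k) • e k) (S t f))
    (N : ℝ) (hN : 1 ≤ N)
    (hspec : ∀ Λ : ℝ, 0 ≤ Λ → ∀ f : Lp ℝ 2 μ,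
      ‖Proj Λ f‖ ≤ N * Real.exp (N * Λ) * ∫ x in E, |(Proj Λ f : Lp ℝ 2 μ) x| ∂μ)
    (T : ℝ) (hT : 0 < T) (J : Set ℝ) (hJm : MeasurableSet J) (hJsub : J ⊆ Set.Ioo 0 T)
    (hJpos : 0 < volume J) :
    ∃ C > 0, ∀ f : Lp ℝ 2 μ,
      ‖S T f‖ ≤ C * ∫ s in (0 : ℝ)..T,
        J.indicator (fun s => ∫ x in E, |(S s f : Lp ℝ 2 μ) x| ∂μ) s := by
  classical
  have hc0 : (0:ℝ) ≤ cLS μ := cLS_nonneg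
  set c0 := cLS μ with hc0def
  -- coefficient identities
  have coeffS : ∀ t, 0 ≤ t → ∀ (f : Lp ℝ 2 μ) k,
      e.repr (S t f) k = Real.exp (-(t * lam k ^ 2)) * e.repr f k :=
    fun t ht f k => coeff_of_hasSum e (hS t ht f) k
  have coeffP : ∀ Λ (f : Lp ℝ 2 μ) k,
      e.repr (Proj Λ f) k = if lam k ≤ Λ then e.repr f k else 0 :=
    fun Λ f k => coeff_of_hasSum e (hProj Λ f) k
  have S0 : ∀ f : Lp ℝ 2 μ, S 0 f = f := by
    intro f
    have h1 := hS 0 le_rfl f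
    simp only [zero_mul, neg_zero, Real.exp_zero, one_mul] at h1
    exact h1.unique (e.hasSum_repr f)
  -- monotonicity of the semigroup norm
  have smono : ∀ t₁ t₂ (f : Lp ℝ 2 μ), 0 ≤ t₁ → t₁ ≤ t₂ → ‖S t₂ f‖ ≤ ‖S t₁ f‖ := by
    intro t₁ t₂ f h1 h2
    have h3 : ‖S t₂ f‖ ≤ 1 * ‖S t₁ f‖ := by
      refine norm_le_of_coeff e zero_le_one fun k => ?_
      rw [coeffS t₂ (h1.trans h2) f k, coeffS t₁ h1 f k, one_mul, abs_mul, abs_mul]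
      have hql : Real.exp (-(t₂ * lam k ^ 2)) ≤ Real.exp (-(t₁ * lam k ^ 2)) :=
        Real.exp_le_exp.mpr (by nlinarith [mul_nonneg (sub_nonneg.mpr h2) (sq_nonneg (lam k))])
      rw [abs_of_pos (Real.exp_pos _), abs_of_pos (Real.exp_pos _)]
      exact mul_le_mul_of_nonneg_right hql (abs_nonneg _)
    linarith
  have snorm_le : ∀ t (f : Lp ℝ 2 μ), 0 ≤ t → ‖S t f‖ ≤ ‖f‖ := by
    intro t f ht
    have := smono 0 t f le_rfl ht
    rwa [S0 f] at this
  have hsubrepr : ∀ (u v : Lp ℝ 2 μ) k, e.repr (u - v) k = e.repr u k - e.repr v k := by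
    intro u v k; rw [map_sub, lp.coeFn_sub, Pi.sub_apply]
  -- high-frequency decay
  have high : ∀ Λ t₁ t₂ (f : Lp ℝ 2 μ), 0 ≤ Λ → 0 ≤ t₁ → t₁ ≤ t₂ →
      ‖S t₂ f - Proj Λ (S t₂ f)‖ ≤ Real.exp (-((t₂ - t₁) * Λ^2)) * ‖S t₁ f‖ := by
    intro Λ t₁ t₂ f hΛ h1 h2
    refine norm_le_of_coeff e (Real.exp_pos _).le fun k => ?_
    rw [hsubrepr (S t₂ f) (Proj Λ (S t₂ f)) k, coeffP Λ (S t₂ f) k,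
      coeffS t₂ (h1.trans h2) f k, coeffS t₁ h1 f k]
    by_cases hk : lam k ≤ Λ
    · rw [if_pos hk, sub_self, abs_zero]
      positivity
    · rw [if_neg hk, sub_zero, abs_mul, abs_mul,
        abs_of_pos (Real.exp_pos (-(t₂ * lam k ^ 2))),
        abs_of_pos (Real.exp_pos (-(t₁ * lam k ^ 2))), ← mul_assoc, ← Real.exp_add]
      push_neg at hk
      have hq : Λ^2 ≤ lam k^2 := pow_le_pow_left₀ hΛ hk.le 2
      have h3 : Real.exp (-(t₂ * lam k ^ 2))
          ≤ Real.exp (-((t₂ - t₁) * Λ ^ 2) + -(t₁ * lam k ^ 2)) :=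
        Real.exp_le_exp.mpr
          (by nlinarith [mul_nonneg (sub_nonneg.mpr h2) (sub_nonneg.mpr hq)])
      exact mul_le_mul_of_nonneg_right h3 (abs_nonneg _)
  -- triangle inequality for set integrals
  have tri : ∀ (a b : Lp ℝ 2 μ),
      (∫ x in E, |a x| ∂μ) ≤ (∫ x in E, |b x| ∂μ) + c0 * ‖a - b‖ := by
    intro a b
    have hint_a := (Lp2.integrable a).abs.restrict (s := E)
    have hint_b := (Lp2.integrable b).abs.restrict (s := E)
    have hint_ab := (Lp2.integrable (a - b)).abs.restrict (s := E)
    have h1 : (∫ x in E, |a x| ∂μ)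
        ≤ ∫ x in E, (|b x| + |((a - b : Lp ℝ 2 μ) : M → ℝ) x|) ∂μ := by
      refine integral_mono_ae hint_a (hint_b.add hint_ab) ?_
      refine ae_restrict_of_ae ?_
      filter_upwards [Lp.coeFn_sub a b] with x hx
      rw [hx]
      calc |a x| = |b x + (a x - b x)| := by ring_nf
        _ ≤ |b x| + |a x - b x| := abs_add_le _ _
    have h2 : ∫ x in E, (|b x| + |((a - b : Lp ℝ 2 μ) : M → ℝ) x|) ∂μ
        = (∫ x in E, |b x| ∂μ) + ∫ x in E, |((a - b : Lp ℝ 2 μ) : M → ℝ) x| ∂μ :=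
      integral_add hint_b hint_ab
    have h3 := Lp2.setInt_abs_le E (a - b)
    linarith
  set K := N * c0 + 1 with hKdef
  have hK1 : (1:ℝ) ≤ K := by nlinarith
  -- core interpolation estimate
  have core : ∀ Λ t₁ t₂ (f : Lp ℝ 2 μ), 0 ≤ Λ → 0 ≤ t₁ → t₁ ≤ t₂ →
      ‖S t₂ f‖ ≤ N * Real.exp (N*Λ) * (∫ x in E, |(S t₂ f : Lp ℝ 2 μ) x| ∂μ)
        + K * Real.exp (N*Λ - (t₂ - t₁) * Λ^2) * ‖S t₁ f‖ := by
    intro Λ t₁ t₂ f hΛ h1 h2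
    have hr : ‖S t₂ f - Proj Λ (S t₂ f)‖ ≤ Real.exp (-((t₂ - t₁) * Λ^2)) * ‖S t₁ f‖ :=
      high Λ t₁ t₂ f hΛ h1 h2
    set r := Real.exp (-((t₂ - t₁) * Λ^2)) * ‖S t₁ f‖ with hrdef
    have hr0 : (0:ℝ) ≤ r := by positivity
    have htri : ‖S t₂ f‖ ≤ ‖Proj Λ (S t₂ f)‖ + ‖S t₂ f - Proj Λ (S t₂ f)‖ := by
      have heq : S t₂ f = Proj Λ (S t₂ f) + (S t₂ f - Proj Λ (S t₂ f)) := by abel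
      nth_rewrite 1 [heq]
      exact norm_add_le _ _
    have hP := hspec Λ hΛ (S t₂ f)
    have hPE : (∫ x in E, |(Proj Λ (S t₂ f) : Lp ℝ 2 μ) x| ∂μ)
        ≤ (∫ x in E, |(S t₂ f : Lp ℝ 2 μ) x| ∂μ) + c0 * ‖Proj Λ (S t₂ f) - S t₂ f‖ :=
      tri (Proj Λ (S t₂ f)) (S t₂ f)
    rw [norm_sub_rev] at hPE
    have e1 : (1:ℝ) ≤ Real.exp (N*Λ) := Real.one_le_exp (by positivity)
    have hre : K * Real.exp (N*Λ - (t₂ - t₁) * Λ^2) * ‖S t₁ f‖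
        = K * Real.exp (N*Λ) * r := by
      rw [hrdef, show N*Λ - (t₂ - t₁) * Λ^2 = N*Λ + -((t₂ - t₁) * Λ^2) by ring,
        Real.exp_add]
      ring
    rw [hre, hKdef]
    have hexp_pos := Real.exp_pos (N*Λ)
    have hEnn : (0:ℝ) ≤ ∫ x in E, |(S t₂ f : Lp ℝ 2 μ) x| ∂μ :=
      integral_nonneg fun x => abs_nonneg _
    have hnorm_nonneg : (0:ℝ) ≤ ‖S t₂ f - Proj Λ (S t₂ f)‖ := norm_nonneg _
    nlinarith [mul_le_mul_of_nonneg_right e1 hr0,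
      mul_le_mul_of_nonneg_left hr (by nlinarith : (0:ℝ) ≤ N * Real.exp (N*Λ) * c0),
      mul_le_mul_of_nonneg_left hPE (by nlinarith : (0:ℝ) ≤ N * Real.exp (N*Λ))]
  -- density point
  obtain ⟨ℓ, hℓJ, r₁, hr₁pos, hdens⟩ := density_aux J hJm hJpos
  obtain ⟨hℓ0, hℓT⟩ := hJsub hℓJ
  set D := min r₁ ((T - ℓ)/2) with hDdef
  have hD0 : 0 < D := lt_min hr₁pos (by linarith)
  have hDr₁ : D ≤ r₁ := min_le_left _ _
  have hDT : ℓ + D ≤ T := by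
    have h := min_le_right r₁ ((T - ℓ)/2)
    rw [← hDdef] at h
    linarith
  set t : ℕ → ℝ := fun m => ℓ + D / 2^m with htdef
  set τ : ℕ → ℝ := fun m => ℓ + (3/4) * (D / 2^m) with hτdef
  have hpow : ∀ m : ℕ, (0:ℝ) < 2^m := fun m => by positivity
  have hpow1 : ∀ m : ℕ, (1:ℝ) ≤ 2^m := fun m => one_le_pow₀ (by norm_num)
  have hDm_pos : ∀ m : ℕ, 0 < D / 2^m := fun m => div_pos hD0 (hpow m)
  have hDm_le : ∀ m : ℕ, D / 2^m ≤ D := fun m => by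
    rw [div_le_iff₀ (hpow m)]
    nlinarith [hpow1 m, hD0]
  have ht_pos : ∀ m, 0 < t m := by
    intro m; simp only [htdef]; have := hDm_pos m; linarith
  have ht_leT : ∀ m, t m ≤ T := by
    intro m; simp only [htdef]; have := hDm_le m; linarith
  have ht_succ_lt_τ : ∀ m, t (m+1) < τ m := by
    intro m
    simp only [htdef, hτdef, pow_succ]
    have h1 : D / (2^m * 2) = (D / 2^m)/2 := by ring
    rw [h1]
    linarith [hDm_pos m]
  have hτ_lt_t : ∀ m, τ m < t m := by
    intro m; simp only [htdef, hτdef]; linarith [hDm_pos m]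
  have hgap : ∀ m, τ m - t (m+1) = D / 2^m / 4 := by
    intro m; simp only [htdef, hτdef, pow_succ]; ring
  have hℓ_lt_τ : ∀ m, ℓ < τ m := by
    intro m; simp only [hτdef]; linarith [hDm_pos m]
  -- lower bound on the measures
  set σ : ℕ → ℝ := fun m => (volume (J ∩ Set.Ioo (τ m) (t m))).toReal with hσdef
  have hvol_fin : ∀ m, volume (J ∩ Set.Ioo (τ m) (t m)) ≠ ⊤ := by
    intro m
    refine ne_top_of_le_ne_top ?_ (measure_mono Set.inter_subset_right)
    rw [Real.volume_Ioo]; exact ENNReal.ofReal_ne_top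
  have hσlb : ∀ m, (3/20) * (D / 2^m) ≤ σ m := by
    intro m
    have h9 := hdens (D / 2^m) (hDm_pos m) ((hDm_le m).trans hDr₁)
    have hsub2 : J ∩ Set.Ioo ℓ (ℓ + D / 2^m)
        ⊆ (J ∩ Set.Ioo (τ m) (t m)) ∪ Set.Ioc ℓ (τ m) := by
      rintro x ⟨hxJ, hx1, hx2⟩
      rcases le_or_gt x (τ m) with h | h
      · exact Or.inr ⟨hx1, h⟩
      · refine Or.inl ⟨hxJ, h, ?_⟩
        simpa only [htdef] using hx2
    have hIocfin : volume (Set.Ioc ℓ (τ m)) ≠ ⊤ := by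
      rw [Real.volume_Ioc]; exact ENNReal.ofReal_ne_top
    have h10 : volume (J ∩ Set.Ioo ℓ (ℓ + D/2^m))
        ≤ volume (J ∩ Set.Ioo (τ m) (t m)) + volume (Set.Ioc ℓ (τ m)) :=
      (measure_mono hsub2).trans (measure_union_le _ _)
    have h11 := ENNReal.toReal_mono (ENNReal.add_ne_top.mpr ⟨hvol_fin m, hIocfin⟩) h10
    rw [ENNReal.toReal_add (hvol_fin m) hIocfin, Real.volume_Ioc] at h11
    have hτℓ : τ m - ℓ = (3/4)*(D/2^m) := by simp only [hτdef]; ring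
    rw [hτℓ, ENNReal.toReal_ofReal (by positivity)] at h11
    simp only [hσdef]
    linarith
  have hσpos : ∀ m, 0 < σ m := fun m =>
    lt_of_lt_of_le (by positivity) (hσlb m)
  -- choice of the frequencies
  set L := max 1 ((4/D) * (5*N + K + 4)) with hLdef
  have hL1 : (1:ℝ) ≤ L := le_max_left _ _
  have hL0 : (0:ℝ) < L := zero_lt_one.trans_le hL1
  have hLkey : 5*N*L + K + 4 ≤ (D/4) * L^2 := by
    have h1 : (4/D) * (5*N + K + 4) ≤ L := le_max_right _ _
    have h3 : (D/4) * ((4/D) * (5*N + K + 4)) = 5*N + K + 4 := by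
      field_simp
    have h2 : 5*N + K + 4 ≤ (D/4) * L := by
      calc 5*N + K + 4 = (D/4) * ((4/D) * (5*N + K + 4)) := h3.symm
        _ ≤ (D/4) * L := mul_le_mul_of_nonneg_left h1 (by linarith)
    calc 5*N*L + K + 4 ≤ (5*N + K + 4) * L := by
          nlinarith [mul_nonneg (by linarith : (0:ℝ) ≤ K + 4) (by linarith : (0:ℝ) ≤ L - 1)]
      _ ≤ ((D/4) * L) * L := mul_le_mul_of_nonneg_right h2 (by linarith)
      _ = (D/4) * L^2 := by ring
  set Lam : ℕ → ℝ := fun m => L * 2^m with hLamdef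
  have hLam_pos : ∀ m, 0 < Lam m := by
    intro m; simp only [hLamdef]; exact mul_pos hL0 (hpow m)
  set q : ℕ → ℝ := fun m => K * Real.exp (N * Lam m - (D / 2^m / 4) * (Lam m)^2) with hqdef
  have hq_pos : ∀ m, 0 < q m := by
    intro m; simp only [hqdef]; exact mul_pos (by linarith) (Real.exp_pos _)
  have hquarter : Real.exp (-Real.log 4) = (1/4:ℝ) := by
    rw [Real.exp_neg, Real.exp_log (by norm_num)]
    norm_num
  have hqub : ∀ m, q m ≤ Real.exp (-(2 * N * Lam (m+1))) * (1/4:ℝ)^(m+1) := by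
    intro m
    have hlog4 : Real.log 4 ≤ 2 := by
      rw [show (4:ℝ) = 2^2 by norm_num, Real.log_pow]
      push_cast
      nlinarith [Real.log_two_lt_d9]
    have hKexp : K ≤ Real.exp K := le_trans (by linarith) (Real.add_one_le_exp K)
    have hpow4 : Real.exp (-((m+1:ℕ):ℝ) * Real.log 4) = ((1:ℝ)/4)^(m+1) := by
      rw [show (-((m+1:ℕ):ℝ) * Real.log 4) = ((m+1:ℕ):ℝ) * (-Real.log 4) by ring,
        Real.exp_nat_mul, hquarter]
    have hexp : K + (N * Lam m - (D / 2^m / 4) * (Lam m)^2)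
        ≤ -(2*N*Lam (m+1)) + (-((m+1:ℕ):ℝ) * Real.log 4) := by
      have hΛm : Lam m = L * 2^m := by simp only [hLamdef]
      have hΛm1 : Lam (m+1) = L * (2^m * 2) := by simp only [hLamdef, pow_succ]
      have hx0 : (0:ℝ) < (2:ℝ)^m := hpow m
      have hx1' : (1:ℝ) ≤ (2:ℝ)^m := hpow1 m
      have hδ : (D / (2:ℝ)^m / 4) * (L*(2:ℝ)^m)^2 = (D/4) * L^2 * (2:ℝ)^m := by
        field_simp
      have hmul := mul_le_mul_of_nonneg_right hLkey (le_of_lt hx0)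
      have hmcast : ((m+1:ℕ):ℝ) = (m:ℝ) + 1 := by push_cast; ring
      have hm2 : (m:ℝ) + 1 ≤ 2 * (2:ℝ)^m := by
        have h := Nat.lt_two_pow_self (n := m)
        have h' : (m:ℝ) < (2:ℝ)^m := by exact_mod_cast h
        linarith [hx1']
      have hlog : ((m+1:ℕ):ℝ) * Real.log 4 ≤ 4 * (2:ℝ)^m := by
        have h0 : (0:ℝ) ≤ ((m+1:ℕ):ℝ) := by positivity
        have hlog0 : (0:ℝ) ≤ Real.log 4 := Real.log_nonneg (by norm_num)
        calc ((m+1:ℕ):ℝ) * Real.log 4 ≤ ((m+1:ℕ):ℝ) * 2 :=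
              mul_le_mul_of_nonneg_left hlog4 h0
          _ ≤ (2 * (2:ℝ)^m) * 2 := by rw [hmcast]; nlinarith [hm2]
          _ = 4 * (2:ℝ)^m := by ring
      have hKx : K ≤ K * (2:ℝ)^m := by nlinarith [hK1, hx1']
      rw [hΛm, hΛm1, hδ]
      nlinarith [hmul, hlog, hKx]
    calc q m = K * Real.exp (N*Lam m - (D/2^m/4)*(Lam m)^2) := by simp only [hqdef]
      _ ≤ Real.exp K * Real.exp (N*Lam m - (D/2^m/4)*(Lam m)^2) :=
          mul_le_mul_of_nonneg_right hKexp (Real.exp_pos _).le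
      _ = Real.exp (K + (N*Lam m - (D/2^m/4)*(Lam m)^2)) := (Real.exp_add _ _).symm
      _ ≤ Real.exp (-(2*N*Lam (m+1)) + (-((m+1:ℕ):ℝ) * Real.log 4)) :=
          Real.exp_le_exp.mpr hexp
      _ = Real.exp (-(2*N*Lam (m+1))) * (1/4:ℝ)^(m+1) := by
          rw [Real.exp_add, hpow4]
  have hq_le : ∀ m, q m ≤ (1/2:ℝ) := by
    intro m
    have h1 := hqub m
    have h2 : Real.exp (-(2*N*Lam (m+1))) ≤ 1 :=
      Real.exp_le_one_iff.mpr (by nlinarith [hLam_pos (m+1)])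
    have h3 : ((1:ℝ)/4)^(m+1) ≤ (1/2:ℝ) := by
      calc ((1:ℝ)/4)^(m+1) ≤ ((1:ℝ)/4)^1 :=
            pow_le_pow_of_le_one (by norm_num) (by norm_num) (by omega)
        _ ≤ 1/2 := by norm_num
    calc q m ≤ Real.exp (-(2*N*Lam (m+1))) * (1/4:ℝ)^(m+1) := h1
      _ ≤ 1 * (1/2) := mul_le_mul h2 h3 (by positivity) zero_le_one
      _ = 1/2 := one_mul _
  set P : ℕ → ℝ := fun m => ∏ j ∈ Finset.range m, q j with hPdef
  have hP_nonneg : ∀ m, 0 ≤ P m := fun m => Finset.prod_nonneg fun j _ => (hq_pos j).le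
  have hP_succ : ∀ m, P (m+1) = P m * q m := fun m => Finset.prod_range_succ _ _
  have hP_le_one : ∀ m, P m ≤ 1 :=
    fun m => Finset.prod_le_one (fun j _ => (hq_pos j).le)
      (fun j _ => (hq_le j).trans (by norm_num))
  have hP_half : ∀ m, P m ≤ (1/2:ℝ)^m := by
    intro m
    calc P m ≤ ∏ j ∈ Finset.range m, (1/2:ℝ) :=
          Finset.prod_le_prod (fun j _ => (hq_pos j).le) (fun j _ => hq_le j)
      _ = (1/2)^m := by rw [Finset.prod_const, Finset.card_range]
  have hPexp : ∀ m, P m * Real.exp (N * Lam m) ≤ (1/4:ℝ)^m * Real.exp (N*L) := by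
    intro m
    cases m with
    | zero =>
      have h1 : P 0 = 1 := Finset.prod_range_zero _
      have h2 : Lam 0 = L := by simp [hLamdef]
      rw [h1, h2, one_mul, pow_zero, one_mul]
    | succ n =>
      have h1 : P (n+1) ≤ q n := by
        rw [hP_succ n]
        nlinarith [hP_le_one n, hq_pos n, hP_nonneg n]
      have hmerge : Real.exp (-(2*N*Lam (n+1))) * Real.exp (N*Lam (n+1))
          = Real.exp (-(N*Lam (n+1))) := by
        rw [← Real.exp_add]; ring_nf
      calc P (n+1) * Real.exp (N * Lam (n+1))
          ≤ (Real.exp (-(2*N*Lam (n+1))) * (1/4:ℝ)^(n+1)) * Real.exp (N*Lam (n+1)) :=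
            mul_le_mul_of_nonneg_right (h1.trans (hqub n)) (Real.exp_pos _).le
        _ = (1/4:ℝ)^(n+1) * (Real.exp (-(2*N*Lam (n+1))) * Real.exp (N*Lam (n+1))) := by
            ring
        _ = (1/4:ℝ)^(n+1) * Real.exp (-(N*Lam (n+1))) := by rw [hmerge]
        _ ≤ (1/4:ℝ)^(n+1) * 1 := by
            refine mul_le_mul_of_nonneg_left ?_ (by positivity)
            exact Real.exp_le_one_iff.mpr (by nlinarith [hLam_pos (n+1)])
        _ ≤ (1/4:ℝ)^(n+1) * Real.exp (N*L) := by
            refine mul_le_mul_of_nonneg_left ?_ (by positivity)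
            exact Real.one_le_exp (by nlinarith [hL0])
  -- the final constant
  have h3D : (0:ℝ) < 3*D := by linarith
  have h20D : (0:ℝ) < 20/(3*D) := div_pos (by norm_num) h3D
  set C₁ := N * Real.exp (N*L) * (20/(3*D)) with hC₁def
  have hC₁pos : 0 < C₁ := by
    refine mul_pos (mul_pos (by linarith) (Real.exp_pos _)) h20D
  refine ⟨2*C₁ + 1, by linarith, fun f => ?_⟩
  -- now fix f
  set g : ℝ → ℝ := fun s => ∫ x in E, |(S s f : Lp ℝ 2 μ) x| ∂μ with hgdef
  have hg0 : ∀ s, 0 ≤ g s := fun s => integral_nonneg fun x => abs_nonneg _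
  have hlip : ∀ a b : Lp ℝ 2 μ,
      |(∫ x in E, |a x| ∂μ) - ∫ x in E, |b x| ∂μ| ≤ c0 * ‖a - b‖ := by
    intro a b
    rw [abs_sub_le_iff]
    constructor
    · have := tri a b; linarith
    · have h := tri b a; rw [norm_sub_rev] at h; linarith
  have hcontg : ContinuousOn g (Set.Ici 0) := by
    intro s₀ hs₀
    have hS' := ctsS_aux e lam S coeffS f s₀ hs₀
    have hdiff : Tendsto (fun s => ‖S s f - S s₀ f‖) (nhdsWithin s₀ (Set.Ici 0)) (nhds 0) :=
      tendsto_iff_norm_sub_tendsto_zero.mp hS'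
    have hcv : Tendsto g (nhdsWithin s₀ (Set.Ici 0)) (nhds (g s₀)) := by
      rw [tendsto_iff_dist_tendsto_zero]
      refine squeeze_zero (g := fun s => c0 * ‖S s f - S s₀ f‖) (fun s => dist_nonneg)
        (fun s => ?_) (by simpa using hdiff.const_mul c0)
      rw [Real.dist_eq]
      exact hlip (S s f) (S s₀ f)
    exact hcv
  have hmeasg : AEMeasurable g (volume.restrict (Set.Ici 0)) :=
    hcontg.aemeasurable measurableSet_Ici
  have hmeasJg : AEMeasurable (J.indicator g) volume := by
    rw [aemeasurable_indicator_iff hJm]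
    exact hmeasg.mono_measure
      (Measure.restrict_mono (fun x hx => (hJsub hx).1.le) le_rfl)
  have hbound : ∀ s, ‖J.indicator g s‖ ≤ c0 * ‖f‖ := by
    intro s
    rw [Real.norm_eq_abs]
    by_cases hs : s ∈ J
    · rw [Set.indicator_of_mem hs, abs_of_nonneg (hg0 s)]
      calc g s ≤ c0 * ‖S s f‖ := Lp2.setInt_abs_le E (S s f)
        _ ≤ c0 * ‖f‖ :=
            mul_le_mul_of_nonneg_left (snorm_le s f (hJsub hs).1.le) hc0
    · rw [Set.indicator_of_notMem hs, abs_zero]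
      positivity
  have hGint : IntegrableOn (J.indicator g) (Set.Ioc 0 T) volume := by
    refine Measure.integrableOn_of_bounded ?_ hmeasJg.aestronglyMeasurable
      (Eventually.of_forall hbound)
    rw [Real.volume_Ioc]; exact ENNReal.ofReal_ne_top
  have hJIoc : J ⊆ Set.Ioc 0 T := fun x hx => ⟨(hJsub hx).1, (hJsub hx).2.le⟩
  have hIeq : (∫ s in (0:ℝ)..T, J.indicator g s) = ∫ s in J, g s := by
    rw [intervalIntegral.integral_of_le hT.le, setIntegral_indicator hJm,
      Set.inter_eq_self_of_subset_right hJIoc]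
  have hgJ : IntegrableOn g J volume :=
    (hGint.mono_set hJIoc).congr (indicator_ae_eq_restrict hJm)
  have hIJ0 : 0 ≤ ∫ s in J, g s := integral_nonneg fun s => hg0 s
  set a : ℕ → ℝ := fun m => ‖S (t m) f‖ with hadef
  have ha0 : ∀ m, 0 ≤ a m := fun m => norm_nonneg _
  set Y : ℕ → ℝ := fun m => ∫ s in J ∩ Set.Ioo (τ m) (t m), g s with hYdef
  have hJmm : ∀ m, MeasurableSet (J ∩ Set.Ioo (τ m) (t m)) :=
    fun m => hJm.inter measurableSet_Ioo
  have hYint : ∀ m, IntegrableOn g (J ∩ Set.Ioo (τ m) (t m)) volume :=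
    fun m => hgJ.mono_set Set.inter_subset_left
  have hY0 : ∀ m, 0 ≤ Y m := fun m => integral_nonneg fun s => hg0 s
  have hYle : ∀ m, Y m ≤ ∫ s in J, g s := fun m =>
    setIntegral_mono_set hgJ (Eventually.of_forall fun s => hg0 s)
      (HasSubset.Subset.eventuallyLE Set.inter_subset_left)
  have hvol_lt : ∀ m, volume (J ∩ Set.Ioo (τ m) (t m)) < ⊤ :=
    fun m => lt_top_iff_ne_top.mpr (hvol_fin m)
  -- the recursive estimate
  have hrec' : ∀ m, a m ≤ (N * Real.exp (N * Lam m) / σ m) * Y m + q m * a (m+1) := by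
    intro m
    have hpt : ∀ s ∈ J ∩ Set.Ioo (τ m) (t m),
        a m ≤ N * Real.exp (N * Lam m) * g s + q m * a (m+1) := by
      intro s hs
      obtain ⟨hsJ, hsτ, hst⟩ := hs
      have hs0 : 0 < s := lt_trans (lt_trans hℓ0 (hℓ_lt_τ m)) hsτ
      have h1 : a m ≤ ‖S s f‖ := smono s (t m) f hs0.le hst.le
      have h2 := core (Lam m) (t (m+1)) s f (hLam_pos m).le (ht_pos (m+1)).le
        (le_of_lt (lt_trans (ht_succ_lt_τ m) hsτ))
      have h3 : K * Real.exp (N*Lam m - (s - t (m+1)) * (Lam m)^2) * ‖S (t (m+1)) f‖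
          ≤ q m * a (m+1) := by
        have hd : D / 2^m / 4 ≤ s - t (m+1) := by
          rw [← hgap m]; linarith
        have hee : Real.exp (N*Lam m - (s - t (m+1)) * (Lam m)^2)
            ≤ Real.exp (N*Lam m - (D/2^m/4) * (Lam m)^2) :=
          Real.exp_le_exp.mpr (by nlinarith [sq_nonneg (Lam m)])
        have : K * Real.exp (N*Lam m - (s - t (m+1)) * (Lam m)^2)
            ≤ q m := by
          simp only [hqdef]
          exact mul_le_mul_of_nonneg_left hee (by linarith)
        exact mul_le_mul_of_nonneg_right this (norm_nonneg _)
      have hgs : (∫ x in E, |(S s f : Lp ℝ 2 μ) x| ∂μ) = g s := by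
        simp only [hgdef]
      rw [hgs] at h2
      calc a m ≤ ‖S s f‖ := h1
        _ ≤ N * Real.exp (N*(Lam m)) * g s
            + K * Real.exp (N*(Lam m) - (s - t (m+1)) * (Lam m)^2) * ‖S (t (m+1)) f‖ := h2
        _ ≤ N * Real.exp (N * Lam m) * g s + q m * a (m+1) := by linarith [h3]
    have hconst_int : IntegrableOn (fun _ : ℝ => a m) (J ∩ Set.Ioo (τ m) (t m)) volume :=
      integrableOn_const (hvol_fin m)
    have hconst_int2 : IntegrableOn (fun _ : ℝ => q m * a (m+1))
        (J ∩ Set.Ioo (τ m) (t m)) volume :=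
      integrableOn_const (hvol_fin m)
    have hmul_int : IntegrableOn (fun s => N * Real.exp (N * Lam m) * g s)
        (J ∩ Set.Ioo (τ m) (t m)) volume := (hYint m).const_mul _
    have hmono := setIntegral_mono_on hconst_int (hmul_int.add hconst_int2) (hJmm m) hpt
    simp only [Pi.add_apply] at hmono
    rw [setIntegral_const, integral_add hmul_int hconst_int2, integral_const_mul,
      setIntegral_const] at hmono
    have hσm : (volume (J ∩ Set.Ioo (τ m) (t m))).toReal = σ m := by simp only [hσdef]
    rw [measureReal_def, hσm, smul_eq_mul, smul_eq_mul] at hmono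
    have hσp := hσpos m
    have h2 : a m - q m * a (m+1) ≤ (N * Real.exp (N * Lam m) * Y m) / σ m := by
      rw [le_div_iff₀ hσp]
      simp only [hYdef] at hmono ⊢
      nlinarith [hmono]
    have h3 : (N * Real.exp (N * Lam m) * Y m) / σ m
        = (N * Real.exp (N * Lam m) / σ m) * Y m := by ring
    rw [h3] at h2
    linarith
  have hPA : ∀ m, P m * (N * Real.exp (N * Lam m) / σ m) ≤ C₁ * (1/2:ℝ)^m := by
    intro m
    have hσp := hσpos m
    have hNe0 : (0:ℝ) ≤ N * Real.exp (N * Lam m) :=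
      mul_nonneg (by linarith) (Real.exp_pos _).le
    have h2 : (1:ℝ) ≤ (20/(3*D)) * 2^m * σ m := by
      have h3 := hσlb m
      have h4 : (20/(3*D)) * (2:ℝ)^m * ((3/20) * (D / 2^m)) = 1 := by
        field_simp
      calc (1:ℝ) = (20/(3*D)) * (2:ℝ)^m * ((3/20) * (D / 2^m)) := h4.symm
        _ ≤ (20/(3*D)) * (2:ℝ)^m * σ m := by
            refine mul_le_mul_of_nonneg_left h3 ?_
            positivity
    have hAle : N * Real.exp (N * Lam m) / σ m
        ≤ N * Real.exp (N * Lam m) * ((20/(3*D)) * 2^m) := by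
      rw [div_le_iff₀ hσp]
      calc N * Real.exp (N * Lam m) = N * Real.exp (N * Lam m) * 1 := (mul_one _).symm
        _ ≤ N * Real.exp (N * Lam m) * ((20/(3*D)) * 2^m * σ m) :=
            mul_le_mul_of_nonneg_left h2 hNe0
        _ = N * Real.exp (N * Lam m) * ((20/(3*D)) * 2^m) * σ m := by ring
    calc P m * (N * Real.exp (N * Lam m) / σ m)
        ≤ P m * (N * Real.exp (N * Lam m) * ((20/(3*D)) * 2^m)) :=
          mul_le_mul_of_nonneg_left hAle (hP_nonneg m)
      _ = (P m * Real.exp (N * Lam m)) * (N * ((20/(3*D)) * 2^m)) := by ring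
      _ ≤ ((1/4:ℝ)^m * Real.exp (N*L)) * (N * ((20/(3*D)) * 2^m)) := by
          refine mul_le_mul_of_nonneg_right (hPexp m) ?_
          positivity
      _ = C₁ * ((1/4:ℝ)^m * 2^m) := by rw [hC₁def]; ring
      _ = C₁ * (1/2:ℝ)^m := by
          rw [← mul_pow]
          norm_num
  -- telescoping
  have hind : ∀ Mi : ℕ, a 0 ≤
      (∑ m ∈ Finset.range Mi, P m * ((N * Real.exp (N * Lam m) / σ m) * Y m))
        + P Mi * a Mi := by
    intro Mi
    induction Mi with
    | zero => simp [hPdef]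
    | succ n ih =>
      refine ih.trans ?_
      rw [Finset.sum_range_succ, hP_succ n]
      have h2 := mul_le_mul_of_nonneg_left (hrec' n) (hP_nonneg n)
      nlinarith [h2]
  have hfin : ∀ Mi : ℕ,
      ‖S T f‖ ≤ 2 * (C₁ * (∫ s in J, g s)) + (1/2:ℝ)^Mi * ‖f‖ := by
    intro Mi
    have ht0T : t 0 ≤ T := ht_leT 0
    have h0 : ‖S T f‖ ≤ a 0 := smono (t 0) T f (ht_pos 0).le ht0T
    have hsum : (∑ m ∈ Finset.range Mi, P m * ((N * Real.exp (N * Lam m) / σ m) * Y m))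
        ≤ ∑ m ∈ Finset.range Mi, (1/2:ℝ)^m * (C₁ * (∫ s in J, g s)) := by
      refine Finset.sum_le_sum fun m _ => ?_
      have hterm : P m * ((N * Real.exp (N * Lam m) / σ m) * Y m)
          = (P m * (N * Real.exp (N * Lam m) / σ m)) * Y m := by ring
      rw [hterm]
      calc (P m * (N * Real.exp (N * Lam m) / σ m)) * Y m
          ≤ (C₁ * (1/2:ℝ)^m) * (∫ s in J, g s) := by
            refine mul_le_mul (hPA m) (hYle m) (hY0 m) ?_
            exact mul_nonneg hC₁pos.le (by positivity)
        _ = (1/2:ℝ)^m * (C₁ * (∫ s in J, g s)) := by ring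
    have hgeom : (∑ m ∈ Finset.range Mi, (1/2:ℝ)^m) ≤ 2 := by
      rw [geom_sum_eq (by norm_num : (1/2:ℝ) ≠ 1)]
      have h5 : (0:ℝ) ≤ (1/2:ℝ)^Mi := by positivity
      rw [div_le_iff_of_neg (by norm_num : (1/2:ℝ) - 1 < 0)]
      linarith
    have hsum2 : (∑ m ∈ Finset.range Mi, (1/2:ℝ)^m * (C₁ * (∫ s in J, g s)))
        = (∑ m ∈ Finset.range Mi, (1/2:ℝ)^m) * (C₁ * (∫ s in J, g s)) := by
      rw [Finset.sum_mul]
    have htail : P Mi * a Mi ≤ (1/2:ℝ)^Mi * ‖f‖ := by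
      have h6 : a Mi ≤ ‖f‖ := snorm_le (t Mi) f (ht_pos Mi).le
      calc P Mi * a Mi ≤ (1/2:ℝ)^Mi * a Mi :=
            mul_le_mul_of_nonneg_right (hP_half Mi) (ha0 Mi)
        _ ≤ (1/2:ℝ)^Mi * ‖f‖ := mul_le_mul_of_nonneg_left h6 (by positivity)
    have h7 := hind Mi
    have h8 : (∑ m ∈ Finset.range Mi, (1/2:ℝ)^m) * (C₁ * (∫ s in J, g s))
        ≤ 2 * (C₁ * (∫ s in J, g s)) :=
      mul_le_mul_of_nonneg_right hgeom (mul_nonneg hC₁pos.le hIJ0)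
    have h9 := (hsum.trans (le_of_eq hsum2)).trans h8
    linarith
  have hlim : Tendsto (fun Mi : ℕ => 2 * (C₁ * (∫ s in J, g s)) + (1/2:ℝ)^Mi * ‖f‖) atTop
      (nhds (2 * (C₁ * (∫ s in J, g s)) + 0 * ‖f‖)) :=
    Tendsto.const_add _
      ((tendsto_pow_atTop_nhds_zero_of_lt_one (by norm_num) (by norm_num)).mul_const _)
  have hfinal : ‖S T f‖ ≤ 2 * (C₁ * (∫ s in J, g s)) := by
    have h10 := ge_of_tendsto' hlim hfin
    simpa using h10
  rw [hIeq]
  nlinarith [hIJ0, hC₁pos, hfinal]
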